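/- arXiv:math/0611007 — 2 statements merged into one kernel-verified Lean document; each statement's English description precedes it below -/
import Mathlib

section
/- Let x > 0 and ε ∈ (0, 1/2). Let f : [x, 2x] → (0,∞) be continuous with s ↦ s·f(s) nondecreasing, and let v : [x,2x] → ℝ be continuous with v(s) ≤ 2ε·s·f(s) for all s. If f(2x) = ∫ₓ^{2x} s^{−2}·v(s) ds + f(x), then f(2x) ≤ (1 − 2ε)^{−1}·f(x). -/
/-- Dyadic contraction step (4.11)–(4.12) in the proof of Proposition 4.6. -/
theorem stmt_9 (x ε : ℝ) (hx : 0 < x) (hε : ε ∈ Set.Ioo (0:ℝ) (1/2))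
    (f v : ℝ → ℝ)
    (hf : ContinuousOn f (Set.Icc x (2*x)))
    (hfpos : ∀ s ∈ Set.Icc x (2*x), 0 < f s)
    (hmono : ∀ s ∈ Set.Icc x (2*x), ∀ t ∈ Set.Icc x (2*x), s ≤ t → s * f s ≤ t * f t)
    (hv : ContinuousOn v (Set.Icc x (2*x)))
    (hvb : ∀ s ∈ Set.Icc x (2*x), v s ≤ 2 * ε * s * f s)
    (heq : f (2*x) = (∫ s in x..(2*x), s ^ (-(2:ℝ)) * v s) + f x) :
    f (2*x) ≤ (1 - 2*ε)⁻¹ * f x := by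
  obtain ⟨hε0, hε2⟩ := hε
  have hle : x ≤ 2*x := by linarith
  have hmem2 : (2*x) ∈ Set.Icc x (2*x) := ⟨hle, le_refl _⟩
  have hne : ∀ s ∈ Set.Icc x (2*x), s ≠ 0 := fun s hs =>
    ne_of_gt (lt_of_lt_of_le hx hs.1)
  have hcrpow : ContinuousOn (fun s : ℝ => s ^ (-(2:ℝ))) (Set.Icc x (2*x)) :=
    ContinuousOn.rpow_const continuousOn_id (fun s hs => Or.inl (hne s hs))
  have hint1 : IntervalIntegrable (fun s => s ^ (-(2:ℝ)) * v s) MeasureTheory.volume x (2*x) := by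
    apply ContinuousOn.intervalIntegrable
    rw [Set.uIcc_of_le hle]
    exact hcrpow.mul hv
  have hint2 : IntervalIntegrable (fun s : ℝ => 2 * ε * (2*x * f (2*x)) * s ^ (-(2:ℝ)))
      MeasureTheory.volume x (2*x) := by
    apply ContinuousOn.intervalIntegrable
    rw [Set.uIcc_of_le hle]
    exact (continuousOn_const.mul hcrpow)
  have hbound : ∀ s ∈ Set.Icc x (2*x),
      s ^ (-(2:ℝ)) * v s ≤ 2 * ε * (2*x * f (2*x)) * s ^ (-(2:ℝ)) := by
    intro s hs
    have hsp : 0 < s := lt_of_lt_of_le hx hs.1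
    have hrp : 0 < s ^ (-(2:ℝ)) := Real.rpow_pos_of_pos hsp _
    have h1 : v s ≤ 2 * ε * (2*x * f (2*x)) := by
      have h2 : s * f s ≤ 2*x * f (2*x) := hmono s hs (2*x) hmem2 hs.2
      have := hvb s hs
      nlinarith
    calc s ^ (-(2:ℝ)) * v s ≤ s ^ (-(2:ℝ)) * (2 * ε * (2*x * f (2*x))) :=
          mul_le_mul_of_nonneg_left h1 hrp.le
      _ = 2 * ε * (2*x * f (2*x)) * s ^ (-(2:ℝ)) := by ring
  have hIle : (∫ s in x..(2*x), s ^ (-(2:ℝ)) * v s)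
      ≤ ∫ s in x..(2*x), 2 * ε * (2*x * f (2*x)) * s ^ (-(2:ℝ)) := by
    apply intervalIntegral.integral_mono_on hle hint1 hint2 hbound
  have hIrpow : (∫ s in x..(2*x), s ^ (-(2:ℝ))) = 1/(2*x) := by
    rw [integral_rpow]
    · have h2x : (2*x) ≠ 0 := by positivity
      have : (-(2:ℝ)) + 1 = -1 := by norm_num
      rw [this]
      rw [Real.rpow_neg_one, Real.rpow_neg_one]
      field_simp
      ring
    · right
      constructor
      · norm_num
      · rw [Set.uIcc_of_le hle]
        intro h
        exact absurd h.1 (by linarith)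
  have hIval : (∫ s in x..(2*x), 2 * ε * (2*x * f (2*x)) * s ^ (-(2:ℝ)))
      = 2 * ε * f (2*x) := by
    rw [intervalIntegral.integral_const_mul, hIrpow]
    have h2x : (2*x) ≠ 0 := by positivity
    field_simp
  have hfx : 0 < f x := hfpos x ⟨le_refl _, hle⟩
  have h1m : 0 < 1 - 2*ε := by linarith
  rw [heq] at *
  rw [hIval] at hIle
  rw [le_inv_mul_iff₀ h1m]
  nlinarith
end

section
/- Let r₀ > 0, K > 0, and ε ∈ (0, 1/10]. Let f : [r₀, ∞) → (0, ∞) be continuous with s ↦ s·f(s) nondecreasing, and let v : [r₀, ∞) → ℝ be continuous such that for all x ≥ r₀: f(x) = ∫_{r₀}^x s^{−2}·v(s) ds + f(r₀), v(s) ≤ 2ε·s·f(s), and |v(s)| ≤ K·s^{2/3}·f(s)^{4/3}. Then f is bounded on [r₀, ∞). -/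
open MeasureTheory Set intervalIntegral

/-- The analytic mechanism of the proof of Proposition 4.6: the integral
identity and the two bounds on `v` force `f` to be bounded on `[r₀, ∞)`. -/
theorem stmt_19 (r₀ K ε : ℝ) (hr₀ : 0 < r₀) (hK : 0 < K)
    (hε : ε ∈ Set.Ioc (0:ℝ) (1/10))
    (f v : ℝ → ℝ)
    (hf : ContinuousOn f (Set.Ici r₀))
    (hfpos : ∀ s ∈ Set.Ici r₀, 0 < f s)
    (hmono : ∀ s ∈ Set.Ici r₀, ∀ t ∈ Set.Ici r₀, s ≤ t → s * f s ≤ t * f t)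
    (hv : ContinuousOn v (Set.Ici r₀))
    (heq : ∀ x ∈ Set.Ici r₀, f x = (∫ s in r₀..x, s ^ (-(2:ℝ)) * v s) + f r₀)
    (hv1 : ∀ s ∈ Set.Ici r₀, v s ≤ 2 * ε * s * f s)
    (hv2 : ∀ s ∈ Set.Ici r₀, |v s| ≤ K * s ^ ((2:ℝ)/3) * (f s) ^ ((4:ℝ)/3)) :
    ∃ C, ∀ x ∈ Set.Ici r₀, f x ≤ C := by
  obtain ⟨hε0, hε1⟩ := hε
  set g : ℝ → ℝ := fun s => s ^ (-(2:ℝ)) * v s with hgdef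
  -- continuity of the integrand on `Ici r₀`
  have hgc : ContinuousOn g (Set.Ici r₀) := by
    apply ContinuousOn.mul _ hv
    exact continuousOn_id.rpow_const fun x hx =>
      Or.inl (ne_of_gt (lt_of_lt_of_le hr₀ hx))
  have hsub : ∀ x ∈ Set.Ici r₀, Set.uIcc r₀ x ⊆ Set.Ici r₀ := by
    intro x hx
    rw [Set.uIcc_of_le hx]
    exact Set.Icc_subset_Ici_self
  have hgint : ∀ x ∈ Set.Ici r₀, IntervalIntegrable g volume r₀ x := fun x hx =>
    (hgc.mono (hsub x hx)).intervalIntegrable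
  -- derivative of `f` at interior points
  have hderiv : ∀ x, r₀ < x → HasDerivAt f (g x) x := by
    intro x hx
    have hmem : Set.Ioi r₀ ∈ nhds x := isOpen_Ioi.mem_nhds hx
    have hgc' : ContinuousOn g (Set.Ioi r₀) := hgc.mono Set.Ioi_subset_Ici_self
    have hF : HasDerivAt (fun u => (∫ s in r₀..u, g s) + f r₀) (g x) x := by
      apply HasDerivAt.add_const
      exact integral_hasDerivAt_right (hgint x (le_of_lt hx))
        (hgc'.stronglyMeasurableAtFilter isOpen_Ioi x hx)
        (hgc'.continuousAt hmem)
    apply hF.congr_of_eventuallyEq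
    filter_upwards [hmem] with y hy
    exact heq y (Set.mem_Ici.mpr (le_of_lt hy))
  -- the weighted function `h`
  set h : ℝ → ℝ := fun x => f x * x ^ (-(2*ε)) with hhdef
  have hx0 : ∀ x : ℝ, r₀ ≤ x → (0:ℝ) < x := fun x hx => lt_of_lt_of_le hr₀ hx
  have hhderiv : ∀ x, r₀ < x →
      HasDerivAt h (g x * x ^ (-(2*ε)) + f x * (-(2*ε) * x ^ (-(2*ε) - 1))) x := by
    intro x hx
    exact (hderiv x hx).mul
      (Real.hasDerivAt_rpow_const (Or.inl (ne_of_gt (hx0 x hx.le))))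
  have hhd0 : ∀ x, r₀ < x →
      g x * x ^ (-(2*ε)) + f x * (-(2*ε) * x ^ (-(2*ε) - 1)) ≤ 0 := by
    intro x hx
    have hx' : (0:ℝ) < x := hx0 x hx.le
    have hfx : 0 < f x := hfpos x hx.le
    have h1 : g x ≤ 2 * ε * f x * x ^ (-(1:ℝ)) := by
      have := hv1 x hx.le
      have h2 : g x ≤ x ^ (-(2:ℝ)) * (2 * ε * x * f x) :=
        mul_le_mul_of_nonneg_left this (Real.rpow_nonneg hx'.le _)
      refine h2.trans_eq ?_
      have : x ^ (-(2:ℝ)) * x = x ^ (-(1:ℝ)) := by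
        nth_rewrite 2 [← Real.rpow_one x]
        rw [← Real.rpow_add hx']; norm_num
      calc x ^ (-(2:ℝ)) * (2 * ε * x * f x)
          = (x ^ (-(2:ℝ)) * x) * (2 * ε * f x) := by ring
        _ = 2 * ε * f x * x ^ (-(1:ℝ)) := by rw [this]; ring
    have h3 : x ^ (-(1:ℝ)) * x ^ (-(2*ε)) = x ^ (-(2*ε) - 1) := by
      rw [← Real.rpow_add hx']; ring_nf
    have h4 : g x * x ^ (-(2*ε)) ≤ 2 * ε * f x * x ^ (-(2*ε) - 1) := by
      calc g x * x ^ (-(2*ε)) ≤ (2 * ε * f x * x ^ (-(1:ℝ))) * x ^ (-(2*ε)) :=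
            mul_le_mul_of_nonneg_right h1 (Real.rpow_nonneg hx'.le _)
        _ = 2 * ε * f x * (x ^ (-(1:ℝ)) * x ^ (-(2*ε))) := by ring
        _ = 2 * ε * f x * x ^ (-(2*ε) - 1) := by rw [h3]
    nlinarith [h4]
  -- `h` is antitone on `Ici r₀`
  have hhc : ContinuousOn h (Set.Ici r₀) := by
    apply hf.mul
    exact continuousOn_id.rpow_const fun x hx =>
      Or.inl (ne_of_gt (hx0 x hx))
  have hant : AntitoneOn h (Set.Ici r₀) := by
    apply antitoneOn_of_deriv_nonpos (convex_Ici r₀) hhc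
    · intro x hx
      rw [interior_Ici] at hx
      exact ((hhderiv x hx).differentiableAt).differentiableWithinAt
    · intro x hx
      rw [interior_Ici] at hx
      rw [(hhderiv x hx).deriv]
      exact hhd0 x hx
  -- Step 1: `f x ≤ C₁ * x ^ (2ε)`
  set C₁ : ℝ := f r₀ * r₀ ^ (-(2*ε)) with hC₁def
  have hC₁pos : 0 < C₁ :=
    mul_pos (hfpos r₀ Set.self_mem_Ici) (Real.rpow_pos_of_pos hr₀ _)
  have hstep1 : ∀ x ∈ Set.Ici r₀, f x ≤ C₁ * x ^ (2*ε) := by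
    intro x hx
    have hx' : (0:ℝ) < x := hx0 x hx
    have := hant (Set.self_mem_Ici) hx hx
    have hcancel : x ^ (-(2*ε)) * x ^ (2*ε) = 1 := by
      rw [← Real.rpow_add hx']; norm_num
    calc f x = f x * x ^ (-(2*ε)) * x ^ (2*ε) := by
          rw [mul_assoc, hcancel, mul_one]
      _ ≤ C₁ * x ^ (2*ε) :=
          mul_le_mul_of_nonneg_right this (Real.rpow_nonneg hx'.le _)
  -- Step 2: pointwise bound on `g`
  set p : ℝ := -(4:ℝ)/3 + 8*ε/3 with hpdef
  set M : ℝ := K * C₁ ^ ((4:ℝ)/3) with hMdef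
  have hMpos : 0 < M := mul_pos hK (Real.rpow_pos_of_pos hC₁pos _)
  have hgle : ∀ s ∈ Set.Ici r₀, g s ≤ M * s ^ p := by
    intro s hs
    have hs' : (0:ℝ) < s := hx0 s hs
    have hfs : 0 < f s := hfpos s hs
    have h1 : g s ≤ s ^ (-(2:ℝ)) * |v s| :=
      mul_le_mul_of_nonneg_left (le_abs_self _) (Real.rpow_nonneg hs'.le _)
    have h2 : (f s) ^ ((4:ℝ)/3) ≤ (C₁ * s ^ (2*ε)) ^ ((4:ℝ)/3) :=
      Real.rpow_le_rpow hfs.le (hstep1 s hs) (by norm_num)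
    have h3 : (C₁ * s ^ (2*ε)) ^ ((4:ℝ)/3)
        = C₁ ^ ((4:ℝ)/3) * s ^ (2*ε*(4/3)) := by
      rw [Real.mul_rpow hC₁pos.le (Real.rpow_nonneg hs'.le _),
        ← Real.rpow_mul hs'.le]
    have h4 : s ^ (-(2:ℝ)) * s ^ ((2:ℝ)/3) * s ^ (2*ε*(4/3)) = s ^ p := by
      rw [← Real.rpow_add hs', ← Real.rpow_add hs', hpdef]; ring_nf
    calc g s ≤ s ^ (-(2:ℝ)) * |v s| := h1
      _ ≤ s ^ (-(2:ℝ)) * (K * s ^ ((2:ℝ)/3) * (f s) ^ ((4:ℝ)/3)) :=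
          mul_le_mul_of_nonneg_left (hv2 s hs) (Real.rpow_nonneg hs'.le _)
      _ ≤ s ^ (-(2:ℝ)) * (K * s ^ ((2:ℝ)/3) * (C₁ ^ ((4:ℝ)/3) * s ^ (2*ε*(4/3)))) := by
          apply mul_le_mul_of_nonneg_left _ (Real.rpow_nonneg hs'.le _)
          apply mul_le_mul_of_nonneg_left _ (by positivity)
          rw [← h3]; exact h2
      _ = M * (s ^ (-(2:ℝ)) * s ^ ((2:ℝ)/3) * s ^ (2*ε*(4/3))) := by ring
      _ = M * s ^ p := by rw [h4]
  -- Step 3: integrate the bound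
  have hp1 : p + 1 < 0 := by rw [hpdef]; linarith
  have hpne : p ≠ -1 := by intro hcontra; rw [hcontra] at hp1; norm_num at hp1
  refine ⟨f r₀ + M * (r₀ ^ (p+1) / (-(p+1))), ?_⟩
  intro x hx
  have hx' : (0:ℝ) < x := hx0 x hx
  have hIbound : (∫ s in r₀..x, g s) ≤ M * (r₀ ^ (p+1) / (-(p+1))) := by
    have hintM : IntervalIntegrable (fun s => M * s ^ p) volume r₀ x := by
      apply ContinuousOn.intervalIntegrable
      apply ContinuousOn.mono _ (hsub x hx)
      exact (continuousOn_id.rpow_const fun s hs =>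
        Or.inl (ne_of_gt (hx0 s hs))).const_smul M
    have hmono' : (∫ s in r₀..x, g s) ≤ ∫ s in r₀..x, M * s ^ p := by
      apply intervalIntegral.integral_mono_on hx (hgint x hx) hintM
      intro s hs
      exact hgle s hs.1
    refine hmono'.trans ?_
    rw [intervalIntegral.integral_const_mul]
    have hval : (∫ s in r₀..x, s ^ p) = (x ^ (p+1) - r₀ ^ (p+1)) / (p+1) := by
      apply integral_rpow
      right
      refine ⟨hpne, ?_⟩
      intro h0
      have := hsub x hx h0
      simp only [Set.mem_Ici] at this
      linarith
    rw [hval]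
    apply mul_le_mul_of_nonneg_left _ hMpos.le
    have hxp : 0 < x ^ (p+1) := Real.rpow_pos_of_pos hx' _
    rw [div_eq_mul_inv, div_eq_mul_inv]
    have hinv : ((p+1)⁻¹ : ℝ) < 0 := inv_neg''.mpr hp1
    calc (x ^ (p+1) - r₀ ^ (p+1)) * (p+1)⁻¹
        ≤ (0 - r₀ ^ (p+1)) * (p+1)⁻¹ := by
          apply mul_le_mul_of_nonpos_right _ hinv.le
          linarith
      _ = r₀ ^ (p+1) * (-(p+1))⁻¹ := by rw [inv_neg]; ring
  calc f x = (∫ s in r₀..x, g s) + f r₀ := heq x hx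
    _ ≤ M * (r₀ ^ (p+1) / (-(p+1))) + f r₀ := by linarith [hIbound]
    _ = f r₀ + M * (r₀ ^ (p+1) / (-(p+1))) := by ring
end
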